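/- Let ε ∈ {−1, 1}, let k : ℝ → ℝ be continuous, and let x, E₁, E₂ : ℝ → ℝ² be continuously differentiable maps satisfying the plane general-affine Frenet system x' = E₁, E₁' = −(1/2)k·E₁ + E₂, E₂' = −ε·E₁ − k·E₂, with E₁(t), E₂(t) linearly independent for all t. Suppose there exist a differentiable function r : ℝ → ℝ and a constant vector v ∈ ℝ² such that x(t) + r(t)·E₂(t) = v for all t. Then r(t) = ε for all t and k(t) = 0 for all t. -/

import Mathlib

/-- A general-affine circle (a curve whose general-affine normal line passes
through a fixed point, i.e. `x + r·E₂ = v`) has `r ≡ ε` and vanishing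
general-affine curvature. -/
theorem stmt_19 (ε : ℝ) (hε : ε = 1 ∨ ε = -1)
    (k : ℝ → ℝ) (hk : Continuous k)
    (x E₁ E₂ : ℝ → Fin 2 → ℝ)
    (hx : ContDiff ℝ 1 x) (h1 : ContDiff ℝ 1 E₁) (h2 : ContDiff ℝ 1 E₂)
    (hxE : ∀ t, deriv x t = E₁ t)
    (hE₁ : ∀ t, deriv E₁ t = (-(1/2) * k t) • E₁ t + E₂ t)
    (hE₂ : ∀ t, deriv E₂ t = (-ε) • E₁ t - k t • E₂ t)
    (hind : ∀ t, LinearIndependent ℝ ![E₁ t, E₂ t])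
    (r : ℝ → ℝ) (hr : Differentiable ℝ r) (v : Fin 2 → ℝ)
    (hcirc : ∀ t, x t + r t • E₂ t = v) :
    (∀ t, r t = ε) ∧ (∀ t, k t = 0) := by
  have hεsq : ε * ε = 1 := by rcases hε with h | h <;> simp [h]
  have hεne : ε ≠ 0 := by rcases hε with h | h <;> norm_num [h]
  have hdx : ∀ t, HasDerivAt x (E₁ t) t := by
    intro t
    have := (hx.differentiable one_ne_zero t).hasDerivAt
    rwa [hxE t] at this
  have hd2 : ∀ t, HasDerivAt E₂ ((-ε) • E₁ t - k t • E₂ t) t := by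
    intro t
    have := (h2.differentiable one_ne_zero t).hasDerivAt
    rwa [hE₂ t] at this
  have key : ∀ t, (1 - ε * r t) • E₁ t + (deriv r t - r t * k t) • E₂ t = 0 := by
    intro t
    have hcomb : HasDerivAt (fun s => x s + r s • E₂ s)
        (E₁ t + (r t • ((-ε) • E₁ t - k t • E₂ t) + deriv r t • E₂ t)) t :=
      (hdx t).add (((hr t).hasDerivAt).smul (hd2 t))
    have hconst : (fun s => x s + r s • E₂ s) = fun _ => v := funext hcirc
    rw [hconst] at hcomb
    have h0 : E₁ t + (r t • ((-ε) • E₁ t - k t • E₂ t) + deriv r t • E₂ t) = 0 :=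
      hcomb.unique (hasDerivAt_const t v)
    rw [← h0]; module
  have hcoef : ∀ t, (1 - ε * r t = 0) ∧ (deriv r t - r t * k t = 0) := by
    intro t
    have := Fintype.linearIndependent_iff.mp (hind t)
      ![1 - ε * r t, deriv r t - r t * k t] (by
        simpa [Fin.sum_univ_two] using key t)
    exact ⟨this 0, this 1⟩
  have hrε : ∀ t, r t = ε := by
    intro t
    have h := (hcoef t).1
    have : ε * r t = 1 := by linarith
    have : ε * (ε * r t) = ε * 1 := by rw [this]
    rw [← mul_assoc, hεsq] at this
    simpa using this
  refine ⟨hrε, fun t => ?_⟩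
  have hrc : r = fun _ => ε := funext hrε
  have hderiv : deriv r t = 0 := by rw [hrc]; simp
  have h := (hcoef t).2
  rw [hderiv, hrε t] at h
  have : ε * k t = 0 := by linarith
  exact (mul_eq_zero.mp this).resolve_left hεne
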